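/- The support lattice of a torus modular invariant is even and self-dual: let Z be a modular invariant for the lattice data (i.e. {0,1}-valued, additive, commuting with S and T, Z_{[0],[0]}=1), and define the set 𝓛 = ⋃ {(u;v) ∈ L* × L* : Z_{[u],[v]} = 1} ⊆ R^{n,n}, equipped with the indefinite form (u;v)·(u';v') = u·u' − v·v'. Then 𝓛 is an even self-dual lattice containing (L;L). -/

import Mathlib

/-!
STATEMENT 0: Every entry of a modular invariant for the lattice (torus) chiral
data is either 0 or 1.
-/

open scoped BigOperators
open Complex

noncomputable section

/-- The Euclidean dot product on `Fin n → ℝ`. -/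
def dotR {n : ℕ} (u v : Fin n → ℝ) : ℝ := ∑ i, u i * v i

lemma dotR_add_left {n : ℕ} (u v w : Fin n → ℝ) :
    dotR (u + v) w = dotR u w + dotR v w := by
  simp [dotR, add_mul, Finset.sum_add_distrib]

lemma dotR_neg_left {n : ℕ} (u w : Fin n → ℝ) : dotR (-u) w = -dotR u w := by
  simp [dotR]

/-- `L` is an even lattice: `u ⬝ u ∈ 2ℤ` for all `u ∈ L`. -/
def IsEvenLattice {n : ℕ} (L : AddSubgroup (Fin n → ℝ)) : Prop :=
  ∀ u ∈ L, ∃ m : ℤ, dotR u u = 2 * m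

/-- The dual lattice `L* = {x : x ⬝ L ⊆ ℤ}`. -/
def dualLattice {n : ℕ} (L : AddSubgroup (Fin n → ℝ)) : AddSubgroup (Fin n → ℝ) where
  carrier := {x | ∀ l ∈ L, ∃ m : ℤ, dotR x l = m}
  zero_mem' := fun l _ => ⟨0, by simp [dotR]⟩
  add_mem' := by
    intro a b ha hb l hl
    obtain ⟨m, hm⟩ := ha l hl
    obtain ⟨m', hm'⟩ := hb l hl
    exact ⟨m + m', by rw [dotR_add_left, hm, hm']; push_cast; ring⟩
  neg_mem' := by
    intro a ha l hl
    obtain ⟨m, hm⟩ := ha l hl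
    exact ⟨-m, by rw [dotR_neg_left, hm]; push_cast; ring⟩

/-- The group of primaries `L*/L`. -/
abbrev latQuot {n : ℕ} (L : AddSubgroup (Fin n → ℝ)) :=
  dualLattice L ⧸ (L.addSubgroupOf (dualLattice L))

/-- The class of an element of `L*` in `L*/L`. -/
def mkQ {n : ℕ} (L : AddSubgroup (Fin n → ℝ)) (x : dualLattice L) : latQuot L :=
  QuotientAddGroup.mk x

/-- The S-matrix of the lattice chiral data:
`S_{[u],[v]} = |L*/L|^{-1/2} exp(2 π i u⬝v)`. -/
def Smat {n : ℕ} (L : AddSubgroup (Fin n → ℝ)) [Fintype (latQuot L)] :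
    Matrix (latQuot L) (latQuot L) ℂ := fun x y =>
  (((Real.sqrt (Fintype.card (latQuot L)))⁻¹ : ℝ) : ℂ) *
    Complex.exp (2 * Real.pi * Complex.I *
      (dotR ((Quotient.out x : dualLattice L) : Fin n → ℝ)
            ((Quotient.out y : dualLattice L) : Fin n → ℝ)))

open scoped Classical in
/-- The T-matrix of the lattice chiral data:
`T_{[u],[u]} = exp(π i u⬝u - π i n/12)`, diagonal. -/
def Tmat {n : ℕ} (L : AddSubgroup (Fin n → ℝ)) :
    Matrix (latQuot L) (latQuot L) ℂ := fun x y =>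
  if x = y then
    Complex.exp (Real.pi * Complex.I *
        (dotR ((Quotient.out x : dualLattice L) : Fin n → ℝ)
              ((Quotient.out x : dualLattice L) : Fin n → ℝ))
      - Real.pi * Complex.I * n / 12)
  else 0

/-- The hyperbolic (signature `(n,n)`) bilinear form
`(u;v)·(u';v') = u·u' − v·v'` on `ℝ^{n,n}`. -/
def hform {n : ℕ} (p q : (Fin n → ℝ) × (Fin n → ℝ)) : ℝ :=
  dotR p.1 q.1 - dotR p.2 q.2

/-- The support set `𝓛 = ⋃ {(u;v) : Z_{[u],[v]} = 1} ⊆ ℝ^{n,n}` of a modular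
invariant `Z`. -/
def suppSet {n : ℕ} (L : AddSubgroup (Fin n → ℝ))
    (Z : latQuot L → latQuot L → ℕ) : Set ((Fin n → ℝ) × (Fin n → ℝ)) :=
  {p | ∃ (h1 : p.1 ∈ dualLattice L) (h2 : p.2 ∈ dualLattice L),
      Z (mkQ L ⟨p.1, h1⟩) (mkQ L ⟨p.2, h2⟩) = 1}


-- ===== auxiliary lemmas =====
section Aux
open Finset

lemma dotR_comm {n : ℕ} (u v : Fin n → ℝ) : dotR u v = dotR v u := by
  simp [dotR, mul_comm]

lemma dotR_add_right {n : ℕ} (u v w : Fin n → ℝ) :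
    dotR u (v + w) = dotR u v + dotR u w := by
  simp [dotR, mul_add, Finset.sum_add_distrib]

lemma dotR_neg_right {n : ℕ} (u w : Fin n → ℝ) : dotR u (-w) = -dotR u w := by
  simp [dotR]

lemma dotR_sub_right {n : ℕ} (u v w : Fin n → ℝ) :
    dotR u (v - w) = dotR u v - dotR u w := by
  rw [sub_eq_add_neg, dotR_add_right, dotR_neg_right]; ring

lemma dotR_sub_left {n : ℕ} (u v w : Fin n → ℝ) :
    dotR (u - v) w = dotR u w - dotR v w := by
  rw [sub_eq_add_neg, dotR_add_left, dotR_neg_left]; ring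

lemma dotR_nonneg {n : ℕ} (u : Fin n → ℝ) : 0 ≤ dotR u u :=
  Finset.sum_nonneg fun i _ => mul_self_nonneg _

lemma dotR_eq_zero {n : ℕ} {u : Fin n → ℝ} (h : dotR u u = 0) : u = 0 := by
  funext i
  have h2 := (Finset.sum_eq_zero_iff_of_nonneg
    (fun j _ => mul_self_nonneg (u j))).1 h i (Finset.mem_univ i)
  simpa using mul_self_eq_zero.1 h2

lemma lattice_small {n : ℕ} (L : AddSubgroup (Fin n → ℝ)) (hEven : IsEvenLattice L)
    {x : Fin n → ℝ} (hx : x ∈ L) (hn : ‖x‖ < 1/(n+1)) : x = 0 := by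
  obtain ⟨m, hm⟩ := hEven x hx
  have hb : dotR x x ≤ 1 := by
    have h1 : ∀ i : Fin n, x i * x i ≤ (1/(n+1))^2 := by
      intro i
      have := norm_le_pi_norm x i
      have hxi : |x i| ≤ 1/(n+1) := le_trans (by simpa using this) (le_of_lt hn)
      calc x i * x i = |x i| * |x i| := by rw [abs_mul_abs_self]
        _ ≤ (1/(n+1)) * (1/(n+1)) := by
            apply mul_le_mul hxi hxi (abs_nonneg _) (by positivity)
        _ = (1/(n+1))^2 := by ring
    calc dotR x x ≤ ∑ _i : Fin n, ((1:ℝ)/(n+1))^2 := Finset.sum_le_sum fun i _ => h1 i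
      _ = n * (1/(n+1))^2 := by
          rw [Finset.sum_const, Finset.card_univ, Fintype.card_fin, nsmul_eq_mul]
      _ ≤ 1 := by
          rw [div_pow, one_pow, mul_one_div, div_le_one (by positivity)]
          nlinarith [Nat.cast_nonneg (α := ℝ) n]
  have hm0 : (m : ℝ) ≤ 0 := by
    have hmle : (m:ℝ) < 1 := by nlinarith
    have : m < 1 := by exact_mod_cast hmle
    exact_mod_cast Int.lt_add_one_iff.mp (by omega)
  have : dotR x x ≤ 0 := by rw [hm]; nlinarith
  exact dotR_eq_zero (le_antisymm this (dotR_nonneg x))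

lemma lattice_discrete {n : ℕ} (L : AddSubgroup (Fin n → ℝ)) (hEven : IsEvenLattice L) :
    DiscreteTopology (AddSubgroup.toIntSubmodule L) := by
  refine discreteTopology_of_isOpen_singleton_zero ?_
  have : ({0} : Set (AddSubgroup.toIntSubmodule L)) =
      Subtype.val ⁻¹' Metric.ball (0 : Fin n → ℝ) (1/(n+1)) := by
    ext ⟨x, hx⟩
    simp only [Set.mem_singleton_iff, Set.mem_preimage, Metric.mem_ball, dist_zero_right]
    constructor
    · intro h
      have hx0 : x = 0 := congrArg Subtype.val h
      rw [hx0]; simpa using by positivity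
    · intro h
      exact Subtype.ext (lattice_small L hEven hx h)
  rw [this]
  exact IsOpen.preimage continuous_subtype_val Metric.isOpen_ball

def stdB {n : ℕ} (i : Fin n) : Fin n → ℝ := Pi.single i 1

lemma stdB_decomp {n : ℕ} (w : Fin n → ℝ) : w = ∑ i, w i • stdB i := by
  funext k
  simp [stdB, Finset.sum_apply, Pi.single_apply, mul_comm]

lemma double_dual {n : ℕ} (L : AddSubgroup (Fin n → ℝ))
    (hEven : IsEvenLattice L)
    (hspan : Submodule.span ℝ (L : Set (Fin n → ℝ)) = ⊤)
    (x : Fin n → ℝ)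
    (hx : ∀ v, (∀ l ∈ L, ∃ m : ℤ, dotR v l = m) → ∃ m : ℤ, dotR x v = m) :
    x ∈ L := by
  classical
  set L' := AddSubgroup.toIntSubmodule L with hL'
  have : DiscreteTopology L' := lattice_discrete L hEven
  have : IsZLattice ℝ L' := ⟨by exact hspan⟩
  have : Module.Finite ℤ L' := ZLattice.module_finite ℝ L'
  have : Module.Free ℤ L' := ZLattice.module_free ℝ L'
  set b := Module.Free.chooseBasis ℤ L' with hb
  set B := b.ofZLatticeBasis ℝ L' with hB
  have hspanB : Submodule.span ℤ (Set.range B) = L' := b.ofZLatticeBasis_span ℝ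
  set b' : Module.Free.ChooseBasisIndex ℤ L' → (Fin n → ℝ) :=
    fun j => fun i => B.coord j (stdB i) with hb'
  have hdot : ∀ j w, dotR (b' j) w = B.coord j w := by
    intro j w
    calc dotR (b' j) w = ∑ i, B.coord j (w i • stdB i) := by
          simp [dotR, hb', mul_comm]
      _ = B.coord j (∑ i, w i • stdB i) := by rw [map_sum]
      _ = B.coord j w := by rw [← stdB_decomp]
  have hint : ∀ j, ∀ l ∈ L, ∃ m : ℤ, B.coord j l = m := by
    intro j l hl
    have hl' : l ∈ Submodule.span ℤ (Set.range B) := by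
      rw [hspanB]; exact hl
    refine Submodule.span_induction ?_ ?_ ?_ ?_ hl'
    · rintro w ⟨i, rfl⟩
      by_cases hij : i = j
      · exact ⟨1, by simp [hij, Module.Basis.coord_apply]⟩
      · exact ⟨0, by simp [Module.Basis.coord_apply, Finsupp.single_apply, hij]⟩
    · exact ⟨0, by simp⟩
    · rintro u v _ _ ⟨m1, h1⟩ ⟨m2, h2⟩
      exact ⟨m1 + m2, by rw [map_add, h1, h2]; push_cast; ring⟩
    · rintro c u _ ⟨m, h⟩
      exact ⟨c * m, by rw [map_zsmul, h]; push_cast [zsmul_eq_mul]; ring⟩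
  have hrepr : ∀ j, ∃ m : ℤ, B.repr x j = m := by
    intro j
    obtain ⟨m, hm⟩ := hx (b' j) (fun l hl => by
      rw [hdot]; exact hint j l hl)
    refine ⟨m, ?_⟩
    rw [← Module.Basis.coord_apply, ← hdot, dotR_comm, hm]
  choose mj hmj using hrepr
  have hxmem : x ∈ Submodule.span ℤ (Set.range B) := by
    have hsum : x = ∑ j, (mj j) • B j := by
      conv_lhs => rw [← B.sum_repr x]
      refine Finset.sum_congr rfl fun j _ => ?_
      rw [hmj j, Int.cast_smul_eq_zsmul]
    rw [hsum]
    exact Submodule.sum_mem _ fun j _ =>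
      Submodule.smul_mem _ (mj j) (Submodule.subset_span ⟨j, rfl⟩)
  rw [hspanB] at hxmem
  exact hxmem

-- quotient lemmas
lemma mkQ_out {n : ℕ} (L : AddSubgroup (Fin n → ℝ)) (a : latQuot L) :
    mkQ L (Quotient.out a) = a := Quotient.out_eq a

lemma mkQ_eq_iff {n : ℕ} (L : AddSubgroup (Fin n → ℝ)) (x y : dualLattice L) :
    mkQ L x = mkQ L y ↔ ((y : Fin n → ℝ) - x) ∈ L := by
  rw [mkQ, mkQ, QuotientAddGroup.eq, AddSubgroup.mem_addSubgroupOf]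
  constructor
  · intro h; simpa [sub_eq_add_neg, add_comm] using h
  · intro h; simpa [sub_eq_add_neg, add_comm] using h

lemma mkQ_add {n : ℕ} (L : AddSubgroup (Fin n → ℝ)) (x y : dualLattice L) :
    mkQ L (x + y) = mkQ L x + mkQ L y := rfl

lemma out_sub_mem {n : ℕ} (L : AddSubgroup (Fin n → ℝ)) (x : dualLattice L) :
    ((Quotient.out (mkQ L x) : dualLattice L) : Fin n → ℝ) - x ∈ L := by
  rw [← mkQ_eq_iff L x (Quotient.out (mkQ L x)), mkQ_out]

-- exp lemmas
lemma exp_two_pi_int (m : ℤ) : Complex.exp (2 * Real.pi * Complex.I * m) = 1 := by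
  have := Complex.exp_int_mul_two_pi_mul_I m
  rw [← this]; ring_nf

lemma exp_two_pi_eq_one_iff (r : ℝ) :
    Complex.exp (2 * Real.pi * Complex.I * r) = 1 ↔ ∃ m : ℤ, r = m := by
  constructor
  · intro h
    rw [Complex.exp_eq_one_iff] at h
    obtain ⟨k, hk⟩ := h
    refine ⟨k, ?_⟩
    have h2 : (2 * Real.pi * Complex.I : ℂ) ≠ 0 := by
      simp [Complex.I_ne_zero, Real.pi_ne_zero]
    have h3 : (2 * Real.pi * Complex.I) * (r:ℂ) = (2 * Real.pi * Complex.I) * (k:ℂ) := by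
      linear_combination hk
    have := mul_left_cancel₀ h2 h3
    exact_mod_cast this
  · rintro ⟨m, rfl⟩; exact exp_two_pi_int m

lemma dotR_zero_right {n : ℕ} (u : Fin n → ℝ) : dotR u (0 : Fin n → ℝ) = 0 := by
  simp [dotR]

lemma even_shift {n : ℕ} (L : AddSubgroup (Fin n → ℝ)) (hEven : IsEvenLattice L)
    {u u' : Fin n → ℝ} (hu' : u' ∈ dualLattice L) (h : u - u' ∈ L) :
    ∃ m : ℤ, dotR u u - dotR u' u' = 2 * m := by
  obtain ⟨m1, hm1⟩ := hEven _ h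
  obtain ⟨m2, hm2⟩ := hu' _ h
  refine ⟨m1 + m2, ?_⟩
  have e : u = u' + (u - u') := by abel
  have hexp : dotR u u = dotR u' u' + dotR u' (u - u') +
      (dotR (u - u') u' + dotR (u - u') (u - u')) := by
    conv_lhs => rw [e]
    rw [dotR_add_left, dotR_add_right, dotR_add_right]
  rw [hexp, hm1, dotR_comm (u - u') u', hm2]
  push_cast; ring

open scoped Classical in
lemma char_sum {n : ℕ} (L : AddSubgroup (Fin n → ℝ)) (hEven : IsEvenLattice L)
    (hspan : Submodule.span ℝ (L : Set (Fin n → ℝ)) = ⊤) [Fintype (latQuot L)]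
    (w : Fin n → ℝ) (hw : w ∈ dualLattice L) :
    (∑ b : latQuot L, Complex.exp (2 * Real.pi * Complex.I *
        dotR ((Quotient.out b : dualLattice L) : Fin n → ℝ) w))
      = if w ∈ L then (Fintype.card (latQuot L) : ℂ) else 0 := by
  rcases em (w ∈ L) with hwL | hwL
  · rw [if_pos hwL]
    have h1 : ∀ b : latQuot L, Complex.exp (2 * Real.pi * Complex.I *
        dotR ((Quotient.out b : dualLattice L) : Fin n → ℝ) w) = 1 := by
      intro b
      obtain ⟨m, hm⟩ := (Quotient.out b : dualLattice L).2 w hwL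
      rw [hm]; exact exp_two_pi_int m
    rw [Finset.sum_congr rfl (fun b _ => h1 b)]
    simp
  · rw [if_neg hwL]
    have hex : ∃ v, (∀ l ∈ L, ∃ m : ℤ, dotR v l = m) ∧ ¬(∃ m : ℤ, dotR w v = m) := by
      by_contra hcon
      push_neg at hcon
      exact hwL (double_dual L hEven hspan w hcon)
    obtain ⟨v₀, hv₀mem, hv₀⟩ := hex
    set t : latQuot L := mkQ L ⟨v₀, hv₀mem⟩ with ht
    set f : latQuot L → ℂ := fun b => Complex.exp (2 * Real.pi * Complex.I *
        dotR ((Quotient.out b : dualLattice L) : Fin n → ℝ) w) with hf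
    set c : ℂ := Complex.exp (2 * Real.pi * Complex.I * dotR v₀ w) with hc
    have hkey : ∀ b : latQuot L, f (b + t) = c * f b := by
      intro b
      have hd : ((Quotient.out (b + t) : dualLattice L) : Fin n → ℝ) -
          (((Quotient.out b : dualLattice L) : Fin n → ℝ) + v₀) ∈ L := by
        have h1 : mkQ L (Quotient.out b + ⟨v₀, hv₀mem⟩) = b + t := by
          rw [mkQ_add, mkQ_out]
        have h2 := (mkQ_eq_iff L (Quotient.out b + ⟨v₀, hv₀mem⟩) (Quotient.out (b+t))).1
          (by rw [mkQ_out, h1])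
        simpa using h2
      set d : Fin n → ℝ := ((Quotient.out (b + t) : dualLattice L) : Fin n → ℝ) -
          (((Quotient.out b : dualLattice L) : Fin n → ℝ) + v₀) with hdd
      obtain ⟨m, hm⟩ := hw d hd
      have hsplit : dotR ((Quotient.out (b + t) : dualLattice L) : Fin n → ℝ) w
          = dotR ((Quotient.out b : dualLattice L) : Fin n → ℝ) w + dotR v₀ w + m := by
        have he2 : ((Quotient.out (b + t) : dualLattice L) : Fin n → ℝ)
            = ((Quotient.out b : dualLattice L) : Fin n → ℝ) + v₀ + d := by
          rw [hdd]; abel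
        rw [he2, dotR_add_left, dotR_add_left, ← hm, dotR_comm w d]
      simp only [hf, hc]
      rw [hsplit]
      push_cast
      set A : ℂ := ((dotR ((Quotient.out b : dualLattice L) : Fin n → ℝ) w : ℝ) : ℂ) with hA
      set V : ℂ := ((dotR v₀ w : ℝ) : ℂ) with hV
      have harg : 2 * (Real.pi:ℂ) * Complex.I * (A + V + (m:ℂ))
          = (2 * (Real.pi:ℂ) * Complex.I * V + 2 * (Real.pi:ℂ) * Complex.I * A)
            + 2 * (Real.pi:ℂ) * Complex.I * (m:ℂ) := by ring
      rw [harg, Complex.exp_add, exp_two_pi_int, mul_one, Complex.exp_add]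
    have hsum : ∑ b, f b = ∑ b, f (b + t) :=
      (Equiv.sum_comp (Equiv.addRight t) f).symm
    have hS : (∑ b, f b) = c * (∑ b, f b) :=
      calc (∑ b, f b) = ∑ b, f (b + t) := hsum
        _ = ∑ b, c * f b := Finset.sum_congr rfl (fun b _ => hkey b)
        _ = c * ∑ b, f b := (Finset.mul_sum _ _ _).symm
    have hc1 : c ≠ 1 := by
      intro hone
      apply hv₀
      obtain ⟨m, hm⟩ := (exp_two_pi_eq_one_iff _).1 hone
      exact ⟨m, by rw [dotR_comm, hm]⟩
    have h0 : (c - 1) * (∑ b, f b) = 0 := by linear_combination -hS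
    rcases mul_eq_zero.1 h0 with h | h
    · exact absurd (sub_eq_zero.1 h) hc1
    · exact h

end Aux

/-- the support lattice of a torus modular invariant is an even
self-dual lattice in `ℝ^{n,n}` containing `(L;L)`. -/
theorem stmt_2 {n : ℕ} (L : AddSubgroup (Fin n → ℝ))
    (hEven : IsEvenLattice L) (hLL : L ≤ dualLattice L)
    (hspan : Submodule.span ℝ (L : Set (Fin n → ℝ)) = ⊤)
    [Fintype (latQuot L)]
    (Z : latQuot L → latQuot L → ℕ)
    (hZS : (Matrix.of fun x y => (Z x y : ℂ)) * Smat L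
          = Smat L * Matrix.of fun x y => (Z x y : ℂ))
    (hZT : (Matrix.of fun x y => (Z x y : ℂ)) * Tmat L
          = Tmat L * Matrix.of fun x y => (Z x y : ℂ))
    (hZ0 : Z 0 0 = 1)
    (h01 : ∀ x y, Z x y = 0 ∨ Z x y = 1)
    (hadd : ∀ u v u' v' : latQuot L,
      Z u v = 1 → Z u' v' = 1 → Z (u + u') (v + v') = 1) :
    (∃ 𝓛 : AddSubgroup ((Fin n → ℝ) × (Fin n → ℝ)),
        (𝓛 : Set ((Fin n → ℝ) × (Fin n → ℝ))) = suppSet L Z) ∧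
    (∀ u ∈ L, ∀ v ∈ L, (u, v) ∈ suppSet L Z) ∧
    (∀ p ∈ suppSet L Z, ∃ m : ℤ, hform p p = 2 * m) ∧
    suppSet L Z = {q | ∀ p ∈ suppSet L Z, ∃ m : ℤ, hform q p = m} := by
  classical
  set V := Fin n → ℝ
  set N := Fintype.card (latQuot L) with hN
  have hNpos : 0 < N := Fintype.card_pos
  -- basic helpers
  have hmk0 : mkQ L 0 = 0 := rfl
  have hmem0 : ∀ {u : V} (hu : u ∈ L), mkQ L ⟨u, hLL hu⟩ = 0 := by
    intro u hu
    have h := (mkQ_eq_iff L ⟨u, hLL hu⟩ 0).2 (by simpa using hu)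
    rw [h, hmk0]
  have hLLsupp : ∀ u ∈ L, ∀ v ∈ L, (u, v) ∈ suppSet L Z := by
    intro u hu v hv
    exact ⟨hLL hu, hLL hv, by rw [hmem0 hu, hmem0 hv]; exact hZ0⟩
  have hsupp_iff : ∀ (x y : dualLattice L),
      ((x : V), (y : V)) ∈ suppSet L Z ↔ Z (mkQ L x) (mkQ L y) = 1 := by
    intro x y
    constructor
    · rintro ⟨h1, h2, hz⟩; exact hz
    · intro hz; exact ⟨x.2, y.2, hz⟩
  have hsupp_out : ∀ c b : latQuot L, Z c b = 1 →
      (((Quotient.out c : dualLattice L) : V), ((Quotient.out b : dualLattice L) : V)) ∈ suppSet L Z := by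
    intro c b h
    exact (hsupp_iff _ _).2 (by rw [mkQ_out, mkQ_out]; exact h)
  -- closure under addition
  have haddsupp : ∀ p ∈ suppSet L Z, ∀ q ∈ suppSet L Z, p + q ∈ suppSet L Z := by
    rintro ⟨p1, p2⟩ ⟨h1, h2, hz⟩ ⟨q1, q2⟩ ⟨g1, g2, gz⟩
    exact ⟨add_mem h1 g1, add_mem h2 g2, hadd _ _ _ _ hz gz⟩
  -- nsmul closure, negation closure
  have hsm : ∀ (m : ℕ) (a b : latQuot L), Z a b = 1 → Z (m • a) (m • b) = 1 := by
    intro m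
    induction m with
    | zero => intro a b _; simp only [zero_nsmul]; exact hZ0
    | succ k ih =>
        intro a b h
        have := hadd _ _ _ _ (ih a b h) h
        simpa [succ_nsmul] using this
  have hnegZ : ∀ a b : latQuot L, Z a b = 1 → Z (-a) (-b) = 1 := by
    intro a b h
    have hcard : ∀ g : latQuot L, (N - 1) • g = -g := by
      intro g
      have h0 : N • g = 0 := by
        rw [hN]
        exact card_nsmul_eq_zero
      have h1 : (N - 1) • g + g = 0 := by
        rw [← succ_nsmul, Nat.sub_add_cancel hNpos]; exact h0
      exact eq_neg_of_add_eq_zero_left h1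
    have := hsm (N - 1) a b h
    rwa [hcard a, hcard b] at this
  have hnegsupp : ∀ p ∈ suppSet L Z, -p ∈ suppSet L Z := by
    rintro ⟨p1, p2⟩ ⟨h1, h2, hz⟩
    exact ⟨neg_mem h1, neg_mem h2, hnegZ _ _ hz⟩
  -- T relation
  have hT : ∀ a b : latQuot L, Z a b = 1 →
      ∃ m : ℤ, dotR ((Quotient.out a : dualLattice L) : V) ((Quotient.out a : dualLattice L) : V)
        - dotR ((Quotient.out b : dualLattice L) : V) ((Quotient.out b : dualLattice L) : V) = 2 * m := by
    intro a b hz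
    have he := congrFun (congrFun hZT a) b
    simp only [Matrix.mul_apply, Matrix.of_apply, Tmat, mul_ite, ite_mul, mul_zero, zero_mul,
      Finset.sum_ite_eq, Finset.sum_ite_eq', Finset.mem_univ, if_true] at he
    rw [hz] at he
    push_cast at he
    rw [one_mul, mul_one] at he
    set α := dotR ((Quotient.out a : dualLattice L) : V) ((Quotient.out a : dualLattice L) : V) with hα
    set β := dotR ((Quotient.out b : dualLattice L) : V) ((Quotient.out b : dualLattice L) : V) with hβ
    have h1 : Complex.exp ((Real.pi * Complex.I * β - Real.pi * Complex.I * n / 12)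
        - (Real.pi * Complex.I * α - Real.pi * Complex.I * n / 12)) = 1 := by
      rw [Complex.exp_sub, he, div_self (Complex.exp_ne_zero _)]
    have harg : (Real.pi * Complex.I * β - Real.pi * Complex.I * n / 12)
        - (Real.pi * Complex.I * α - Real.pi * Complex.I * n / 12)
        = 2 * Real.pi * Complex.I * (((β - α) / 2 : ℝ) : ℂ) := by
      push_cast; ring
    rw [harg] at h1
    obtain ⟨m, hm⟩ := (exp_two_pi_eq_one_iff _).1 h1
    exact ⟨-m, by push_cast; linarith⟩
  -- evenness on the support
  have hEvenSupp : ∀ p ∈ suppSet L Z, ∃ m : ℤ, hform p p = 2 * m := by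
    rintro ⟨p1, p2⟩ ⟨h1, h2, hz⟩
    obtain ⟨m, hm⟩ := hT (mkQ L ⟨p1, h1⟩) (mkQ L ⟨p2, h2⟩) hz
    obtain ⟨m1, hm1⟩ := even_shift L hEven
      (Quotient.out (mkQ L ⟨p1, h1⟩) : dualLattice L).2
      (by simpa using neg_mem (out_sub_mem L ⟨p1, h1⟩))
    obtain ⟨m2, hm2⟩ := even_shift L hEven
      (Quotient.out (mkQ L ⟨p2, h2⟩) : dualLattice L).2
      (by simpa using neg_mem (out_sub_mem L ⟨p2, h2⟩))
    refine ⟨m + m1 - m2, ?_⟩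
    show dotR p1 p1 - dotR p2 p2 = 2 * ((m + m1 - m2 : ℤ) : ℝ)
    push_cast
    push_cast at hm1 hm2
    linarith
  -- integrality of the form between support elements
  have hInt : ∀ p ∈ suppSet L Z, ∀ q ∈ suppSet L Z, ∃ m : ℤ, hform p q = m := by
    intro p hp q hq
    obtain ⟨m3, hm3⟩ := hEvenSupp (p + q) (haddsupp p hp q hq)
    obtain ⟨m1, hm1⟩ := hEvenSupp p hp
    obtain ⟨m2, hm2⟩ := hEvenSupp q hq
    refine ⟨m3 - m1 - m2, ?_⟩
    have hexpand : hform (p + q) (p + q) = hform p p + 2 * hform p q + hform q q := by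
      show dotR (p.1 + q.1) (p.1 + q.1) - dotR (p.2 + q.2) (p.2 + q.2)
        = (dotR p.1 p.1 - dotR p.2 p.2) + 2 * (dotR p.1 q.1 - dotR p.2 q.2)
          + (dotR q.1 q.1 - dotR q.2 q.2)
      rw [dotR_add_left, dotR_add_left, dotR_add_right, dotR_add_right,
        dotR_add_right, dotR_add_right, dotR_comm q.1 p.1, dotR_comm q.2 p.2]
      ring
    rw [hexpand, hm1, hm2] at hm3
    push_cast
    linarith
  -- extract the S identity without normalization
  have hkne : (((Real.sqrt N)⁻¹ : ℝ) : ℂ) ≠ 0 := by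
    have hpos : (0:ℝ) < Real.sqrt N := Real.sqrt_pos.2 (by exact_mod_cast hNpos)
    exact Complex.ofReal_ne_zero.2 (inv_ne_zero (ne_of_gt hpos))
  have hI : ∀ a b : latQuot L,
      (∑ c, (Z a c : ℂ) * Complex.exp (2 * Real.pi * Complex.I *
          dotR ((Quotient.out c : dualLattice L) : V) ((Quotient.out b : dualLattice L) : V)))
      = ∑ c, Complex.exp (2 * Real.pi * Complex.I *
          dotR ((Quotient.out a : dualLattice L) : V) ((Quotient.out c : dualLattice L) : V)) * (Z c b : ℂ) := by
    intro a b
    have he := congrFun (congrFun hZS a) b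
    simp only [Matrix.mul_apply, Matrix.of_apply, Smat] at he
    rw [← hN] at he
    have hL2 : ∑ c, (Z a c : ℂ) * ((((Real.sqrt N)⁻¹ : ℝ) : ℂ) * Complex.exp (2 * Real.pi * Complex.I *
          dotR ((Quotient.out c : dualLattice L) : V) ((Quotient.out b : dualLattice L) : V)))
        = (((Real.sqrt N)⁻¹ : ℝ) : ℂ) * ∑ c, (Z a c : ℂ) * Complex.exp (2 * Real.pi * Complex.I *
          dotR ((Quotient.out c : dualLattice L) : V) ((Quotient.out b : dualLattice L) : V)) := by
      rw [Finset.mul_sum]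
      exact Finset.sum_congr rfl fun c _ => by ring
    have hR2 : ∑ c, ((((Real.sqrt N)⁻¹ : ℝ) : ℂ) * Complex.exp (2 * Real.pi * Complex.I *
          dotR ((Quotient.out a : dualLattice L) : V) ((Quotient.out c : dualLattice L) : V))) * (Z c b : ℂ)
        = (((Real.sqrt N)⁻¹ : ℝ) : ℂ) * ∑ c, Complex.exp (2 * Real.pi * Complex.I *
          dotR ((Quotient.out a : dualLattice L) : V) ((Quotient.out c : dualLattice L) : V)) * (Z c b : ℂ) := by
      rw [Finset.mul_sum]
      exact Finset.sum_congr rfl fun c _ => by ring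
    exact mul_left_cancel₀ hkne ((hL2.symm.trans he).trans hR2)
  -- main double-sum identity
  set Ns : ℂ := ∑ c : latQuot L, ∑ b : latQuot L, (Z c b : ℂ) with hNs
  have KEY : ∀ (x y : dualLattice L),
      (∀ p ∈ suppSet L Z, ∃ m : ℤ, dotR (x : V) p.1 - dotR (y : V) p.2 = m) →
      (N : ℂ) * (Z (mkQ L x) (mkQ L y) : ℂ) = Ns := by
    intro x y hdual
    set a := mkQ L x with ha
    set F : latQuot L → ℂ := fun b => Complex.exp (2 * Real.pi * Complex.I *
        dotR ((Quotient.out b : dualLattice L) : V) (-(y : V))) with hF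
    have hmerge : ∀ b c : latQuot L,
        Complex.exp (2 * Real.pi * Complex.I *
          dotR ((Quotient.out c : dualLattice L) : V) ((Quotient.out b : dualLattice L) : V)) * F b
        = Complex.exp (2 * Real.pi * Complex.I *
          dotR ((Quotient.out b : dualLattice L) : V) (((Quotient.out c : dualLattice L) : V) - (y : V))) := by
      intro b c
      rw [hF, ← Complex.exp_add]
      congr 1
      rw [dotR_sub_right, dotR_neg_right,
        dotR_comm ((Quotient.out c : dualLattice L) : V) ((Quotient.out b : dualLattice L) : V)]
      push_cast; ring
    have hLHS : ∑ b, (∑ c, (Z a c : ℂ) * Complex.exp (2 * Real.pi * Complex.I *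
          dotR ((Quotient.out c : dualLattice L) : V) ((Quotient.out b : dualLattice L) : V))) * F b
        = (N : ℂ) * (Z a (mkQ L y) : ℂ) := by
      calc ∑ b, (∑ c, (Z a c : ℂ) * Complex.exp (2 * Real.pi * Complex.I *
          dotR ((Quotient.out c : dualLattice L) : V) ((Quotient.out b : dualLattice L) : V))) * F b
          = ∑ b, ∑ c, (Z a c : ℂ) * (Complex.exp (2 * Real.pi * Complex.I *
            dotR ((Quotient.out c : dualLattice L) : V) ((Quotient.out b : dualLattice L) : V)) * F b) := by
            refine Finset.sum_congr rfl fun b _ => ?_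
            rw [Finset.sum_mul]
            exact Finset.sum_congr rfl fun c _ => by ring
        _ = ∑ c, ∑ b, (Z a c : ℂ) * (Complex.exp (2 * Real.pi * Complex.I *
            dotR ((Quotient.out c : dualLattice L) : V) ((Quotient.out b : dualLattice L) : V)) * F b) :=
            Finset.sum_comm
        _ = ∑ c, (Z a c : ℂ) * ∑ b, Complex.exp (2 * Real.pi * Complex.I *
            dotR ((Quotient.out b : dualLattice L) : V) (((Quotient.out c : dualLattice L) : V) - (y : V))) := by
            refine Finset.sum_congr rfl fun c _ => ?_
            rw [Finset.mul_sum]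
            exact Finset.sum_congr rfl fun b _ => by rw [hmerge]
        _ = ∑ c, (Z a c : ℂ) * (if (((Quotient.out c : dualLattice L) : V) - (y : V)) ∈ L
              then (N : ℂ) else 0) := by
            refine Finset.sum_congr rfl fun c _ => ?_
            have hcs := char_sum L hEven hspan
              ((((Quotient.out c : dualLattice L) : V)) - (y : V))
              (sub_mem (Quotient.out c : dualLattice L).2 y.2)
            rw [← hN] at hcs
            exact congrArg (fun t => (Z a c : ℂ) * t) hcs
        _ = ∑ c, (if c = mkQ L y then (Z a c : ℂ) * (N : ℂ) else 0) := by
            refine Finset.sum_congr rfl fun c _ => ?_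
            rcases em (c = mkQ L y) with hc | hc
            · have hmem : (((Quotient.out c : dualLattice L) : V)) - (y : V) ∈ L := by
                have he2 : mkQ L y = mkQ L (Quotient.out c) := by rw [mkQ_out, hc]
                exact (mkQ_eq_iff L y (Quotient.out c)).1 he2
              rw [if_pos hc, if_pos hmem]
            · have hnmem : ¬((((Quotient.out c : dualLattice L) : V)) - (y : V) ∈ L) := by
                intro hmem
                have h3 := (mkQ_eq_iff L y (Quotient.out c)).2 hmem
                rw [mkQ_out] at h3
                exact hc h3.symm
              rw [if_neg hc, if_neg hnmem, mul_zero]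
        _ = (Z a (mkQ L y) : ℂ) * (N : ℂ) := by
            rw [Finset.sum_ite_eq' Finset.univ (mkQ L y) (fun c => (Z a c : ℂ) * (N : ℂ))]
            simp
        _ = (N : ℂ) * (Z a (mkQ L y) : ℂ) := by ring
    have hRHS : ∑ b, (∑ c, Complex.exp (2 * Real.pi * Complex.I *
          dotR ((Quotient.out a : dualLattice L) : V) ((Quotient.out c : dualLattice L) : V)) * (Z c b : ℂ)) * F b
        = Ns := by
      calc ∑ b, (∑ c, Complex.exp (2 * Real.pi * Complex.I *
          dotR ((Quotient.out a : dualLattice L) : V) ((Quotient.out c : dualLattice L) : V)) * (Z c b : ℂ)) * F b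
          = ∑ b, ∑ c, (Z c b : ℂ) * (Complex.exp (2 * Real.pi * Complex.I *
            dotR ((Quotient.out a : dualLattice L) : V) ((Quotient.out c : dualLattice L) : V)) * F b) := by
            refine Finset.sum_congr rfl fun b _ => ?_
            rw [Finset.sum_mul]
            exact Finset.sum_congr rfl fun c _ => by ring
        _ = ∑ b, ∑ c, (Z c b : ℂ) := by
            refine Finset.sum_congr rfl fun b _ => Finset.sum_congr rfl fun c _ => ?_
            rcases h01 c b with h | h
            · rw [h]; simp
            · rw [h]
              have hp : (((Quotient.out c : dualLattice L) : V), ((Quotient.out b : dualLattice L) : V))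
                  ∈ suppSet L Z := hsupp_out c b h
              obtain ⟨m2, hm2⟩ := hdual _ hp
              obtain ⟨m1, hm1⟩ := (Quotient.out c : dualLattice L).2
                (((Quotient.out a : dualLattice L) : V) - (x : V)) (out_sub_mem L x)
              have hone : Complex.exp (2 * Real.pi * Complex.I *
                  dotR ((Quotient.out a : dualLattice L) : V) ((Quotient.out c : dualLattice L) : V)) * F b = 1 := by
                rw [hF, ← Complex.exp_add]
                have hargR : (2 * Real.pi * Complex.I *
                    dotR ((Quotient.out a : dualLattice L) : V) ((Quotient.out c : dualLattice L) : V))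
                    + 2 * Real.pi * Complex.I *
                    dotR ((Quotient.out b : dualLattice L) : V) (-(y : V))
                    = 2 * Real.pi * Complex.I * (((m1 + m2 : ℤ) : ℝ) : ℂ) := by
                  have e1 : dotR ((Quotient.out a : dualLattice L) : V) ((Quotient.out c : dualLattice L) : V)
                      = dotR (x : V) ((Quotient.out c : dualLattice L) : V) + m1 := by
                    have := dotR_sub_left ((Quotient.out a : dualLattice L) : V) (x : V)
                      ((Quotient.out c : dualLattice L) : V)
                    rw [dotR_comm] at hm1
                    linarith
                  have e2 : dotR ((Quotient.out b : dualLattice L) : V) (-(y : V))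
                      = -(dotR (y : V) ((Quotient.out b : dualLattice L) : V)) := by
                    rw [dotR_neg_right, dotR_comm]
                  rw [e1, e2]
                  have e3 : ((dotR (x:V) ((Quotient.out c : dualLattice L) : V) : ℝ) : ℂ)
                      - ((dotR (y:V) ((Quotient.out b : dualLattice L) : V) : ℝ) : ℂ) = (m2:ℂ) := by
                    exact_mod_cast hm2
                  push_cast
                  linear_combination (2 * (Real.pi:ℂ) * Complex.I) * e3
                rw [hargR]
                exact exp_two_pi_int (m1 + m2)
              rw [hone]; ring
        _ = Ns := by rw [hNs, Finset.sum_comm]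
    rw [← hLHS, ← hRHS]
    exact Finset.sum_congr rfl fun b _ => by rw [hI a b]
  -- pin down Ns
  have hNsN : Ns = (N : ℂ) := by
    have h := KEY 0 0 (fun p hp => ⟨0, by simp [dotR]⟩)
    rw [hmk0, hZ0] at h
    push_cast at h
    rw [mul_one] at h
    exact h.symm
  have hNne : ((N : ℂ)) ≠ 0 := Nat.cast_ne_zero.2 hNpos.ne'
  have hZdual : ∀ (x y : dualLattice L),
      (∀ p ∈ suppSet L Z, ∃ m : ℤ, dotR (x : V) p.1 - dotR (y : V) p.2 = m) →
      Z (mkQ L x) (mkQ L y) = 1 := by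
    intro x y hdual
    have h := KEY x y hdual
    rw [hNsN] at h
    have h2 : (Z (mkQ L x) (mkQ L y) : ℂ) = 1 := by
      have := mul_left_cancel₀ hNne (h.trans (mul_one (N:ℂ)).symm)
      exact this
    exact_mod_cast h2
  -- assemble the four conjuncts
  refine ⟨⟨{ carrier := suppSet L Z
             add_mem' := fun hp hq => haddsupp _ hp _ hq
             zero_mem' := hLLsupp 0 (zero_mem L) 0 (zero_mem L)
             neg_mem' := fun hp => hnegsupp _ hp }, rfl⟩,
          hLLsupp, hEvenSupp, ?_⟩
  apply Set.Subset.antisymm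
  · intro q hq p hp
    exact hInt q hq p hp
  · intro q hq
    have hq1 : q.1 ∈ dualLattice L := by
      intro l hl
      obtain ⟨m, hm⟩ := hq (l, (0:V)) (hLLsupp l hl 0 (zero_mem L))
      refine ⟨m, ?_⟩
      have : hform q (l, (0:V)) = dotR q.1 l := by
        show dotR q.1 l - dotR q.2 0 = dotR q.1 l
        rw [dotR_zero_right]; ring
      rw [← this]; exact hm
    have hq2 : q.2 ∈ dualLattice L := by
      intro l hl
      obtain ⟨m, hm⟩ := hq ((0:V), l) (hLLsupp 0 (zero_mem L) l hl)
      refine ⟨-m, ?_⟩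
      have : hform q ((0:V), l) = -(dotR q.2 l) := by
        show dotR q.1 0 - dotR q.2 l = -(dotR q.2 l)
        rw [dotR_zero_right]; ring
      rw [this] at hm
      push_cast
      linarith
    have hz := hZdual ⟨q.1, hq1⟩ ⟨q.2, hq2⟩ (fun p hp => hq p hp)
    exact ⟨hq1, hq2, hz⟩


end
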